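/- Let T be an open convex cone, x a boundary point of T, and y ∈ T. Set y_λ := (1−λ)x + λy for λ ∈ (0,1). Then for every z ∈ T, the difference F_T(z, y_λ) − F_{τ(T,x)}(z, y_λ) tends to 0 as λ → 0, where τ(T,x) is the open tangent cone to T at x. -/

import Mathlib

open Set Filter Topology

variable {V : Type*} [NormedAddCommGroup V] [NormedSpace ℝ V] [FiniteDimensional ℝ V]

/-- An open cone: non-empty, open, convex, invariant under positive scaling, not containing 0. -/
def IsOpenCone (T : Set V) : Prop :=
  T.Nonempty ∧ IsOpen T ∧ Convex ℝ T ∧ (∀ c : ℝ, 0 < c → ∀ u ∈ T, c • u ∈ T) ∧ (0 : V) ∉ T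

/-- The gauge `M_T(y/x) = inf {λ > 0 : λ • x - y ∈ closure T}`. -/
noncomputable def funkM (T : Set V) (y x : V) : ℝ :=
  sInf {l : ℝ | 0 < l ∧ l • x - y ∈ closure T}

/-- The Funk metric `F_T(x,y) = log inf {λ > 0 : λ • y - x ∈ closure T}`. -/
noncomputable def funkF (T : Set V) (x y : V) : ℝ := Real.log (funkM T x y)

/-- The reverse Funk metric `r_T(x,y) = F_T(y,x)`. -/
noncomputable def revF (T : Set V) (x y : V) : ℝ := Real.log (funkM T y x)

/-- The Hilbert metric as the symmetrisation of the Funk metric. -/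
noncomputable def hilD (T : Set V) (x y : V) : ℝ := funkF T x y + revF T x y

/-- The dual cone, as a set of continuous linear functionals. -/
def dualCone (T : Set V) : Set (V →L[ℝ] ℝ) := {z | ∀ u ∈ T, 0 ≤ z u}

/-- The open tangent cone `τ(T,x) = {λ (w - x) : λ > 0, w ∈ T}`. -/
def openTangent (T : Set V) (x : V) : Set V :=
  {v | ∃ l : ℝ, 0 < l ∧ ∃ w ∈ T, v = l • (w - x)}

set_option maxHeartbeats 1000000
lemma mem_openTangent_iff' {T : Set V} {x v : V} :
    v ∈ openTangent T x ↔ ∃ t : ℝ, 0 < t ∧ x + t • v ∈ T := by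
  constructor
  · rintro ⟨l, hl, w, hw, rfl⟩
    refine ⟨l⁻¹, inv_pos.2 hl, ?_⟩
    rw [smul_smul, inv_mul_cancel₀ hl.ne', one_smul]
    simpa using hw
  · rintro ⟨t, ht, h⟩
    refine ⟨t⁻¹, inv_pos.2 ht, _, h, ?_⟩
    rw [add_sub_cancel_left, smul_smul, inv_mul_cancel₀ ht.ne', one_smul]

lemma combo_mem' {T : Set V} (hT : IsOpenCone T) {x : V} (hx : x ∈ closure T) {w : V} (hw : w ∈ T)
    {t : ℝ} (ht : 0 < t) (ht1 : t ≤ 1) : x + t • (w - x) ∈ T := by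
  have h := hT.2.2.1.combo_interior_closure_mem_interior
    (x := w) (y := x) (a := t) (b := 1 - t) (by rwa [hT.2.1.interior_eq]) hx ht (by linarith) (by ring)
  rw [hT.2.1.interior_eq] at h
  convert h using 1
  module

lemma mono_mem' {T : Set V} (hT : IsOpenCone T) {x : V} (hx : x ∈ closure T) {v : V} {t t' : ℝ}
    (h : x + t • v ∈ T) (ht' : 0 < t') (htt : t' ≤ t) : x + t' • v ∈ T := by
  have ht : 0 < t := lt_of_lt_of_le ht' htt
  have h2 := combo_mem' hT hx h (div_pos ht' ht) ((div_le_one ht).2 htt)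
  rwa [add_sub_cancel_left, smul_smul, div_mul_cancel₀ _ ht.ne'] at h2

lemma subset_openTangent' {T : Set V} (hT : IsOpenCone T) {x : V} (hx : x ∈ closure T) :
    T ⊆ openTangent T x := by
  intro v hv
  rw [mem_openTangent_iff']
  refine ⟨2, two_pos, ?_⟩
  have h2 : (2:ℝ) • v ∈ T := hT.2.2.2.1 2 two_pos v hv
  have hmid := combo_mem' hT hx h2 (t := 1/2) (by norm_num) (by norm_num)
  have hfin := hT.2.2.2.1 2 two_pos _ hmid
  have heq : x + (2:ℝ) • v = (2:ℝ) • (x + (1/2:ℝ) • ((2:ℝ) • v - x)) := by module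
  rw [heq]
  exact hfin

lemma isOpen_openTangent' {T : Set V} (hT : IsOpenCone T) {x : V} :
    IsOpen (openTangent T x) := by
  have h : openTangent T x = ⋃ t : {t : ℝ // 0 < t}, (fun v => x + t.1 • v) ⁻¹' T := by
    ext v
    simp only [mem_iUnion, mem_preimage, mem_openTangent_iff', Subtype.exists, exists_prop]
  rw [h]
  exact isOpen_iUnion fun t =>
    hT.2.1.preimage (continuous_const.add (continuous_id.const_smul t.1))

lemma convex_openTangent' {T : Set V} (hT : IsOpenCone T) {x : V} (hx : x ∈ closure T) :
    Convex ℝ (openTangent T x) := by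
  intro v₁ h₁ v₂ h₂ a b ha hb hab
  rw [mem_openTangent_iff'] at h₁ h₂ ⊢
  obtain ⟨t₁, ht₁, hm₁⟩ := h₁
  obtain ⟨t₂, ht₂, hm₂⟩ := h₂
  have htm : 0 < min t₁ t₂ := lt_min ht₁ ht₂
  refine ⟨min t₁ t₂, htm, ?_⟩
  have m₁ := mono_mem' hT hx hm₁ htm (min_le_left _ _)
  have m₂ := mono_mem' hT hx hm₂ htm (min_le_right _ _)
  have h := hT.2.2.1 m₁ m₂ ha hb hab
  convert h using 1
  have hb' : b = 1 - a := by linarith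
  subst hb'
  module

lemma smul_mem_openTangent' {T : Set V} {x v : V} {c : ℝ} (hc : 0 < c)
    (h : v ∈ openTangent T x) : c • v ∈ openTangent T x := by
  rw [mem_openTangent_iff'] at h ⊢
  obtain ⟨t, ht, hm⟩ := h
  refine ⟨t / c, div_pos ht hc, ?_⟩
  rwa [smul_smul, div_mul_cancel₀ _ hc.ne']

lemma smul_mem_closure' {S : Set V} (hS : ∀ c : ℝ, 0 < c → ∀ u ∈ S, c • u ∈ S) {c : ℝ}
    (hc : 0 < c) {u : V} (hu : u ∈ closure S) : c • u ∈ closure S :=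
  map_mem_closure (continuous_const_smul c) hu (fun a ha => hS c hc a ha)

lemma add_mem_closure_cone' {S : Set V} (hconv : Convex ℝ S)
    (hS : ∀ c : ℝ, 0 < c → ∀ u ∈ S, c • u ∈ S) {p q : V}
    (hp : p ∈ closure S) (hq : q ∈ closure S) : p + q ∈ closure S := by
  have hmid : (1/2 : ℝ) • p + (1/2 : ℝ) • q ∈ closure S :=
    hconv.closure hp hq (by norm_num) (by norm_num) (by norm_num)
  have h := smul_mem_closure' hS two_pos hmid
  convert h using 1
  module

lemma zero_mem_closure' {T : Set V} (hT : IsOpenCone T) : (0:V) ∈ closure T := by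
  obtain ⟨w, hw⟩ := hT.1
  have h1 : Tendsto (fun n : ℕ => (1 / ((n:ℝ)+1)) • w) atTop (𝓝 (0:V)) := by
    simpa using (tendsto_one_div_add_atTop_nhds_zero_nat :
      Tendsto (fun n : ℕ => 1 / ((n:ℝ)+1)) atTop (𝓝 0)).smul_const w
  exact mem_closure_of_tendsto h1
    (Eventually.of_forall fun n => hT.2.2.2.1 _ (by positivity) _ hw)

lemma neg_mem_closure_openTangent' {T : Set V} (hT : IsOpenCone T) {x : V} :
    -x ∈ closure (openTangent T x) := by
  obtain ⟨w, hw⟩ := hT.1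
  have h1 : Tendsto (fun n : ℕ => (1/((n:ℝ)+1)) • w - x) atTop (𝓝 (-x)) := by
    have := ((tendsto_one_div_add_atTop_nhds_zero_nat :
      Tendsto (fun n : ℕ => 1 / ((n:ℝ)+1)) atTop (𝓝 0)).smul_const w).sub_const x
    simpa using this
  refine mem_closure_of_tendsto h1 (Eventually.of_forall fun n => ?_)
  exact ⟨1, one_pos, _, hT.2.2.2.1 (1/((n:ℝ)+1)) (by positivity) w hw, by rw [one_smul]⟩

lemma exists_functional' {T : Set V} (hT : IsOpenCone T) {x : V} (hx : x ∈ frontier T)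
    {z : V} (hz : z ∈ T) :
    ∃ f : V →L[ℝ] ℝ, (∀ a ∈ closure (openTangent T x), 0 ≤ f a) ∧ 0 < f z := by
  have hxc : x ∈ closure T := frontier_subset_closure hx
  have hτo : IsOpen (openTangent T x) := isOpen_openTangent' hT
  have hτconv : Convex ℝ (openTangent T x) := convex_openTangent' hT hxc
  have hzτ : z ∈ openTangent T x := subset_openTangent' hT hxc hz
  have hxnT : x ∉ T := by
    rw [hT.2.1.frontier_eq] at hx
    exact hx.2
  have hnz : -z ∉ closure (openTangent T x) := by
    intro h
    have h0 : (0:V) ∈ openTangent T x := by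
      have := hτconv.combo_interior_closure_mem_interior (x := z) (y := -z)
        (by rwa [hτo.interior_eq]) h (a := 1/2) (b := 1/2) (by norm_num) (by norm_num)
        (by norm_num)
      rw [hτo.interior_eq] at this
      convert this using 1
      module
    obtain ⟨t, ht, hm⟩ := mem_openTangent_iff'.1 h0
    rw [smul_zero, add_zero] at hm
    exact hxnT hm
  obtain ⟨f, u, hfu, hfz⟩ :=
    geometric_hahn_banach_closed_point hτconv.closure isClosed_closure hnz
  have h0c : (0:V) ∈ closure (openTangent T x) :=
    closure_mono (subset_openTangent' hT hxc) (zero_mem_closure' hT)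
  have hu0 : 0 < u := by simpa using hfu 0 h0c
  have hτscale : ∀ c : ℝ, 0 < c → ∀ v ∈ openTangent T x, c • v ∈ openTangent T x :=
    fun c hc v hv => smul_mem_openTangent' hc hv
  refine ⟨-f, fun a ha => ?_, ?_⟩
  · simp only [ContinuousLinearMap.neg_apply, Left.nonneg_neg_iff]
    by_contra hlt
    push_neg at hlt
    have hca : ((u+1)/f a) • a ∈ closure (openTangent T x) :=
      smul_mem_closure' hτscale (div_pos (by linarith) hlt) ha
    have h2 := hfu _ hca
    rw [map_smul, smul_eq_mul, div_mul_cancel₀ _ hlt.ne'] at h2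
    linarith
  · have : f (-z) = -(f z) := map_neg f z
    simp only [ContinuousLinearMap.neg_apply]
    rw [this] at hfz
    linarith

lemma uniform_scale' {T : Set V} (hT : IsOpenCone T) {x : V} (hx : x ∈ closure T) {z : V}
    (hz : z ∈ openTangent T x) {m K : ℝ} (hm : 0 < m) (hK : 0 ≤ K) :
    ∃ δ > 0, ∀ u ∈ closure (openTangent T x), ‖u‖ ≤ K →
      ∀ μ : ℝ, 0 < μ → μ ≤ δ → x + μ • (u + m • z) ∈ T := by
  have hτo : IsOpen (openTangent T x) := isOpen_openTangent' hT
  have hτconv : Convex ℝ (openTangent T x) := convex_openTangent' hT hx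
  set A : Set V := closure (openTangent T x) ∩ Metric.closedBall 0 K with hA
  have hAcp : IsCompact A :=
    (isCompact_closedBall (0:V) K).of_isClosed_subset
      (isClosed_closure.inter Metric.isClosed_closedBall) inter_subset_right
  set U : {t : ℝ // 0 < t} → Set V := fun t => (fun p => x + t.1 • (p + m • z)) ⁻¹' T with hU
  have hUopen : ∀ t, IsOpen (U t) := fun t =>
    hT.2.1.preimage (continuous_const.add ((continuous_id.add continuous_const).const_smul t.1))
  have hcov : A ⊆ ⋃ t, U t := by
    rintro u ⟨hu1, _⟩
    have h1 : m • z ∈ openTangent T x := smul_mem_openTangent' hm hz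
    have h2 : (1/2:ℝ) • (m • z) + (1/2:ℝ) • u ∈ openTangent T x := by
      have := hτconv.combo_interior_closure_mem_interior
        (by rwa [hτo.interior_eq]) hu1 (a := 1/2) (b := 1/2) (by norm_num) (by norm_num)
        (by norm_num)
      rwa [hτo.interior_eq] at this
    have h3 : u + m • z ∈ openTangent T x := by
      have := smul_mem_openTangent' two_pos h2
      convert this using 1
      module
    obtain ⟨t, ht, hmem⟩ := mem_openTangent_iff'.1 h3
    exact mem_iUnion.2 ⟨⟨t, ht⟩, hmem⟩
  obtain ⟨s, hs⟩ := hAcp.elim_finite_subcover U hUopen hcov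
  have h0A : (0:V) ∈ A := ⟨closure_mono (subset_openTangent' hT hx) (zero_mem_closure' hT),
    by simpa using hK⟩
  have hsne : s.Nonempty := by
    rcases mem_iUnion₂.1 (hs h0A) with ⟨i, hi, _⟩
    exact ⟨i, hi⟩
  refine ⟨s.inf' hsne (fun i => i.1), (Finset.lt_inf'_iff hsne).2 fun i _ => i.2, ?_⟩
  intro u hu hnorm μ hμ hμδ
  have huA : u ∈ A := ⟨hu, by simpa [Metric.mem_closedBall, dist_zero_right] using hnorm⟩
  rcases mem_iUnion₂.1 (hs huA) with ⟨i, hi, hmem⟩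
  exact mono_mem' hT hx hmem hμ (le_trans hμδ (Finset.inf'_le _ hi))

/-- along a segment toward a boundary point `x` of `T`, the Funk distances
from a fixed point `z` measured in `T` and in the open tangent cone `τ(T,x)` agree in
the limit. -/
theorem funkF_tangent_difference_tendsto_zero (T : Set V) (hT : IsOpenCone T)
    (x : V) (hx : x ∈ frontier T) (y : V) (hy : y ∈ T) (z : V) (hz : z ∈ T) :
    Tendsto (fun l : ℝ => funkF T z ((1 - l) • x + l • y)
        - funkF (openTangent T x) z ((1 - l) • x + l • y)) (𝓝[>] (0 : ℝ)) (𝓝 0) := by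
  have hxc : x ∈ closure T := frontier_subset_closure hx
  have hconv : Convex ℝ (openTangent T x) := convex_openTangent' hT hxc
  have hsubτ : T ⊆ openTangent T x := subset_openTangent' hT hxc
  have hclsub : closure T ⊆ closure (openTangent T x) := closure_mono hsubτ
  have hτscale : ∀ c : ℝ, 0 < c → ∀ u ∈ openTangent T x, c • u ∈ openTangent T x :=
    fun c hc u hu => smul_mem_openTangent' hc hu
  -- a constant c with y - c • z ∈ T
  obtain ⟨c, hcmem, hc⟩ : ∃ c : ℝ, (y - c • z ∈ T) ∧ 0 < c := by
    have hcont : ContinuousAt (fun c : ℝ => y - c • z) 0 :=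
      (continuous_const.sub (continuous_id.smul continuous_const)).continuousAt
    have h0 : y - (0:ℝ) • z = y := by simp
    have hev : ∀ᶠ c in 𝓝 (0:ℝ), y - c • z ∈ T :=
      hcont.eventually_mem (by rw [h0]; exact hT.2.1.mem_nhds hy)
    have hev' : ∀ᶠ c in 𝓝[>] (0:ℝ), y - c • z ∈ T := hev.filter_mono nhdsWithin_le_nhds
    exact (hev'.and (eventually_mem_nhdsWithin)).exists
  obtain ⟨f, hf, hfz⟩ := exists_functional' hT hx hz
  have hxτ : x ∈ closure (openTangent T x) := hclsub hxc
  have hfx : f x = 0 := by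
    have h1 : 0 ≤ f x := hf x hxτ
    have h2 : 0 ≤ f (-x) := hf _ (neg_mem_closure_openTangent' hT)
    rw [map_neg] at h2
    linarith
  set C := f y / f z with hC
  have hfy : 0 ≤ f y := hf y (hclsub (subset_closure hy))
  have hCpos : 0 ≤ C := div_nonneg hfy hfz.le
  set K := ‖y - x‖ + 2 * C * ‖z‖ + 1 with hK
  have hK0 : 0 ≤ K := by positivity
  rw [Metric.tendsto_nhdsWithin_nhds]
  intro ε' hε'
  set ε : ℝ := 1 - Real.exp (-(ε'/2)) with hεdef
  have hexp1 : Real.exp (-(ε'/2)) < 1 := Real.exp_lt_one_iff.2 (by linarith)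
  have hexp0 : 0 < Real.exp (-(ε'/2)) := Real.exp_pos _
  have hεpos : 0 < ε := by rw [hεdef]; linarith
  have hεlt : ε < 1 := by rw [hεdef]; linarith
  obtain ⟨δ₀, hδ₀, hδ⟩ := uniform_scale' hT hxc (hsubτ hz) (mul_pos hεpos hc) hK0
  refine ⟨min δ₀ 1, lt_min hδ₀ one_pos, ?_⟩
  intro l hl hld
  have hl0 : 0 < l := hl
  rw [Real.dist_eq, sub_zero, abs_of_pos hl0] at hld
  have hlδ : l ≤ δ₀ := (lt_of_lt_of_le hld (min_le_left _ _)).le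
  have hl1 : l ≤ 1 := (lt_of_lt_of_le hld (min_le_right _ _)).le
  set w : V := (1 - l) • x + l • y with hwdef
  have hwx : w = x + l • (y - x) := by rw [hwdef]; module
  -- the sup along the ray
  set S : Set ℝ := {s : ℝ | 0 < s ∧ w - s • z ∈ closure (openTangent T x)} with hSdef
  have hclS : c * l ∈ S := by
    refine ⟨mul_pos hc hl0, ?_⟩
    have h1 : x + l • ((y - c • z) - x) ∈ T := combo_mem' hT hxc hcmem hl0 hl1
    have h2 : w - (c * l) • z = x + l • ((y - c • z) - x) := by rw [hwx]; module
    rw [h2]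
    exact subset_closure (hsubτ h1)
  have hSne : S.Nonempty := ⟨_, hclS⟩
  have hSbdd : ∀ s ∈ S, s ≤ C * l := by
    rintro s ⟨hs0, hsm⟩
    have h1 : 0 ≤ f (w - s • z) := hf _ hsm
    rw [map_sub, map_smul, smul_eq_mul] at h1
    have hfw : f w = l * f y := by
      rw [hwdef, map_add, map_smul, map_smul, smul_eq_mul, smul_eq_mul, hfx]
      ring
    rw [hfw] at h1
    rw [hC]
    rw [div_mul_eq_mul_div, le_div_iff₀ hfz]
    nlinarith
  have hbddA : BddAbove S := ⟨C * l, hSbdd⟩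
  set sτ := sSup S with hsτdef
  have hsτ_ge : c * l ≤ sτ := le_csSup hbddA hclS
  have hsτ_pos : 0 < sτ := lt_of_lt_of_le (mul_pos hc hl0) hsτ_ge
  have hsτ_le : sτ ≤ C * l := csSup_le hSne hSbdd
  have hsτ_mem : w - sτ • z ∈ closure (openTangent T x) := by
    have h1 : sτ ∈ closure S := csSup_mem_closure hSne hbddA
    have h2 : closure S ⊆ {s : ℝ | w - s • z ∈ closure (openTangent T x)} := by
      apply closure_minimal (fun s hs => hs.2)
      exact IsClosed.preimage (continuous_const.sub (continuous_id.smul continuous_const))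
        isClosed_closure
    exact h2 h1
  have hvmem : l • (y - x) - sτ • z ∈ closure (openTangent T x) := by
    have h1 : (w - sτ • z) + (-x) ∈ closure (openTangent T x) :=
      add_mem_closure_cone' hconv hτscale hsτ_mem (neg_mem_closure_openTangent' hT)
    have h2 : l • (y - x) - sτ • z = (w - sτ • z) + (-x) := by rw [hwx]; module
    rw [h2]
    exact h1
  set a : ℝ := ε * (sτ / l - c) with hadef
  have hcsl : c ≤ sτ / l := (le_div_iff₀ hl0).2 (by linarith [hsτ_ge])
  have ha0 : 0 ≤ a := mul_nonneg hεpos.le (by linarith)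
  have hsld : sτ / l ≤ C := by rw [div_le_iff₀ hl0]; linarith [hsτ_le]
  set u : V := l⁻¹ • (l • (y - x) - sτ • z) + a • z with hudef
  have humem : u ∈ closure (openTangent T x) := by
    apply add_mem_closure_cone' hconv hτscale
    · exact smul_mem_closure' hτscale (inv_pos.2 hl0) hvmem
    · rcases ha0.eq_or_lt with h | h
      · rw [← h, zero_smul]
        exact hclsub (zero_mem_closure' hT)
      · exact smul_mem_closure' hτscale h (subset_closure (hsubτ hz))
  have hunorm : ‖u‖ ≤ K := by
    have h1 : ‖u‖ ≤ ‖l⁻¹ • (l • (y - x) - sτ • z)‖ + ‖a • z‖ := norm_add_le _ _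
    have h2 : ‖l⁻¹ • (l • (y - x) - sτ • z)‖ = l⁻¹ * ‖l • (y - x) - sτ • z‖ := by
      rw [norm_smul, Real.norm_eq_abs, abs_of_pos (inv_pos.2 hl0)]
    have h3 : ‖l • (y - x) - sτ • z‖ ≤ l * ‖y - x‖ + sτ * ‖z‖ := by
      calc ‖l • (y - x) - sτ • z‖ ≤ ‖l • (y - x)‖ + ‖sτ • z‖ := norm_sub_le _ _
        _ = l * ‖y - x‖ + sτ * ‖z‖ := by
            rw [norm_smul, norm_smul, Real.norm_eq_abs, Real.norm_eq_abs,
              abs_of_pos hl0, abs_of_pos hsτ_pos]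
    have h4 : ‖a • z‖ = a * ‖z‖ := by
      rw [norm_smul, Real.norm_eq_abs, abs_of_nonneg ha0]
    have h5 : l⁻¹ * (l * ‖y - x‖ + sτ * ‖z‖) = ‖y - x‖ + (sτ / l) * ‖z‖ := by
      field_simp
    have h6 : a ≤ C := by
      calc a = ε * (sτ / l - c) := hadef
        _ ≤ 1 * (sτ / l) := by nlinarith [hεpos.le, hεlt.le, hc.le, hcsl]
        _ ≤ C := by linarith [hsld]
    have hz0 : (0:ℝ) ≤ ‖z‖ := norm_nonneg _
    have h7 : l⁻¹ * ‖l • (y - x) - sτ • z‖ ≤ ‖y - x‖ + C * ‖z‖ := by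
      calc l⁻¹ * ‖l • (y - x) - sτ • z‖ ≤ l⁻¹ * (l * ‖y - x‖ + sτ * ‖z‖) := by
            apply mul_le_mul_of_nonneg_left h3 (inv_pos.2 hl0).le
        _ = ‖y - x‖ + (sτ / l) * ‖z‖ := h5
        _ ≤ ‖y - x‖ + C * ‖z‖ := by nlinarith [hsld]
    rw [hK]
    calc ‖u‖ ≤ l⁻¹ * ‖l • (y - x) - sτ • z‖ + a * ‖z‖ := by rw [← h2, ← h4]; exact h1
      _ ≤ (‖y - x‖ + C * ‖z‖) + C * ‖z‖ := by nlinarith [h6, h7]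
      _ ≤ ‖y - x‖ + 2 * C * ‖z‖ + 1 := by linarith
  have hkey : w - ((1 - ε) * sτ) • z ∈ T := by
    have h1 : x + l • (u + (ε * c) • z) ∈ T := hδ u humem hunorm l hl0 hlδ
    have h2 : x + l • (u + (ε * c) • z) = w - ((1 - ε) * sτ) • z := by
      rw [hudef, hadef, hwx]
      have hl' : l ≠ 0 := hl0.ne'
      match_scalars <;> field_simp <;> ring
    rwa [h2] at h1
  -- gauge set inequalities
  set setT : Set ℝ := {m : ℝ | 0 < m ∧ m • w - z ∈ closure T} with hsetT
  set setτ : Set ℝ := {m : ℝ | 0 < m ∧ m • w - z ∈ closure (openTangent T x)} with hsetτ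
  have hss : setT ⊆ setτ := fun m hm => ⟨hm.1, hclsub hm.2⟩
  have h1εs : 0 < (1 - ε) * sτ := mul_pos (by linarith) hsτ_pos
  have hmemT : ((1 - ε) * sτ)⁻¹ ∈ setT := by
    refine ⟨inv_pos.2 h1εs, ?_⟩
    have h1 := smul_mem_closure' hT.2.2.2.1 (inv_pos.2 h1εs) (subset_closure hkey)
    have h2 : ((1 - ε) * sτ)⁻¹ • w - z = ((1 - ε) * sτ)⁻¹ • (w - ((1 - ε) * sτ) • z) := by
      rw [smul_sub, smul_smul, inv_mul_cancel₀ h1εs.ne', one_smul]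
    rw [h2]
    exact h1
  have hlbτ : ∀ m ∈ setτ, sτ⁻¹ ≤ m := by
    rintro m ⟨hm0, hmm⟩
    have h1 : m⁻¹ ∈ S := by
      refine ⟨inv_pos.2 hm0, ?_⟩
      have h2 := smul_mem_closure' hτscale (inv_pos.2 hm0) hmm
      have h3 : w - m⁻¹ • z = m⁻¹ • (m • w - z) := by
        rw [smul_sub, smul_smul, inv_mul_cancel₀ hm0.ne', one_smul]
      rw [h3]
      exact h2
    have h4 : m⁻¹ ≤ sτ := le_csSup hbddA h1
    have h5 := inv_anti₀ (inv_pos.2 hm0) h4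
    rwa [inv_inv] at h5
  have hsetτne : setτ.Nonempty := ⟨_, hss hmemT⟩
  have hbddB : BddBelow setτ := ⟨0, fun m hm => hm.1.le⟩
  have hMτ_lb : sτ⁻¹ ≤ funkM (openTangent T x) z w := le_csInf hsetτne hlbτ
  have hMτ_pos : 0 < funkM (openTangent T x) z w :=
    lt_of_lt_of_le (inv_pos.2 hsτ_pos) hMτ_lb
  have hMT_le : funkM T z w ≤ ((1 - ε) * sτ)⁻¹ := csInf_le (hbddB.mono hss) hmemT
  have hMτT : funkM (openTangent T x) z w ≤ funkM T z w :=
    csInf_le_csInf hbddB ⟨_, hmemT⟩ hss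
  have hMT_pos : 0 < funkM T z w := lt_of_lt_of_le hMτ_pos hMτT
  -- logarithms
  have hd1 : 0 ≤ funkF T z w - funkF (openTangent T x) z w :=
    sub_nonneg.2 (Real.log_le_log hMτ_pos hMτT)
  have hd2 : funkF T z w - funkF (openTangent T x) z w ≤ ε' / 2 := by
    have h1 : Real.log (funkM T z w) ≤ Real.log (((1 - ε) * sτ)⁻¹) :=
      Real.log_le_log hMT_pos hMT_le
    have h2 : Real.log (sτ⁻¹) ≤ Real.log (funkM (openTangent T x) z w) :=
      Real.log_le_log (inv_pos.2 hsτ_pos) hMτ_lb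
    have h3 : Real.log (((1 - ε) * sτ)⁻¹) = -Real.log (1 - ε) - Real.log sτ := by
      rw [Real.log_inv, Real.log_mul (by linarith) hsτ_pos.ne']
      ring
    have h4 : Real.log sτ⁻¹ = -Real.log sτ := Real.log_inv _
    have h5 : Real.log (1 - ε) = -(ε' / 2) := by
      rw [hεdef]
      rw [show (1:ℝ) - (1 - Real.exp (-(ε'/2))) = Real.exp (-(ε'/2)) by ring]
      exact Real.log_exp _
    show Real.log (funkM T z w) - Real.log (funkM (openTangent T x) z w) ≤ ε' / 2
    rw [h3, h5] at h1
    rw [h4] at h2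
    linarith
  rw [Real.dist_eq, sub_zero, abs_of_nonneg hd1]
  linarith
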